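/- Let F be the operator on bounded cost functions d : S × S → [0, R_max/(1−γ)] defined by F(d)(s_i,s_j) = max_a { |R(s_i,a) − R'(s_j,a)| + γ W₁(P(·|s_i,a), P'(·|s_j,a); d) }, where R_max = max_{i,j,a} |R(s_i,a) − R'(s_j,a)|. Then F is a γ-contraction in the sup norm, and hence has a unique fixed point d̄ (the DT bisimulation metric). -/
import Mathlib


open Finset Filter

variable {S A : Type*}

/-- A coupling of two distributions on a finite set: nonnegative matrix with
row marginals `P` and column marginals `Q`. -/
def IsCoupling [Fintype S] (P Q : S → ℝ) (lam : S → S → ℝ) : Prop :=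
  (∀ i j, 0 ≤ lam i j) ∧ (∀ i, ∑ j, lam i j = P i) ∧ (∀ j, ∑ i, lam i j = Q j)

/-- The 1-Wasserstein distance on a finite set with cost function `d`:
the minimal transport cost over all couplings of `P` and `Q`. -/
noncomputable def W1 [Fintype S] (P Q : S → ℝ) (d : S → S → ℝ) : ℝ :=
  sInf {c : ℝ | ∃ lam, IsCoupling P Q lam ∧ c = ∑ i, ∑ j, lam i j * d i j}

/-- `P` is a probability distribution on the finite set `S`. -/
def IsProbDist [Fintype S] (P : S → ℝ) : Prop := (∀ i, 0 ≤ P i) ∧ ∑ i, P i = 1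

/-- Total variation distance between two distributions on a finite set. -/
noncomputable def TVdist [Fintype S] (P Q : S → ℝ) : ℝ := (1/2) * ∑ i, |P i - Q i|

/-- The Bellman optimality operator of a finite MDP. -/
noncomputable def bellman [Fintype S] [Fintype A] [Nonempty A]
    (P : S → A → S → ℝ) (R : S → A → ℝ) (γ : ℝ) (V : S → ℝ) : S → ℝ :=
  fun s => ⨆ a : A, (R s a + γ * ∑ t, P s a t * V t)

/-- The DT-BSM operator `F` between two MDPs sharing state and action spaces. -/
noncomputable def Fop [Fintype S] [Fintype A] [Nonempty A]
    (P P' : S → A → S → ℝ) (R R' : S → A → ℝ) (γ : ℝ) (d : S → S → ℝ) : S → S → ℝ :=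
  fun i j => ⨆ a : A, (|R i a - R' j a| + γ * W1 (P i a) (P' j a) d)


set_option linter.unusedSectionVars false
set_option linter.unusedVariables false

section Aux
variable [Fintype S]

lemma coupling_sum {P Q : S → ℝ} (hP : ∑ i, P i = 1) {lam} (h : IsCoupling P Q lam) :
    ∑ i, ∑ j, lam i j = 1 := by
  rw [← hP]; exact Finset.sum_congr rfl fun i _ => h.2.1 i

lemma cost_le {P Q : S → ℝ} (hP : ∑ i, P i = 1) {lam} (h : IsCoupling P Q lam)
    {d : S → S → ℝ} {b : ℝ} (hb : ∀ i j, d i j ≤ b) :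
    ∑ i, ∑ j, lam i j * d i j ≤ b := by
  calc ∑ i, ∑ j, lam i j * d i j ≤ ∑ i, ∑ j, lam i j * b := by
        refine Finset.sum_le_sum fun i _ => Finset.sum_le_sum fun j _ => ?_
        exact mul_le_mul_of_nonneg_left (hb i j) (h.1 i j)
    _ = (∑ i, ∑ j, lam i j) * b := by simp [Finset.sum_mul]
    _ = b := by rw [coupling_sum hP h, one_mul]

lemma le_cost {P Q : S → ℝ} (hP : ∑ i, P i = 1) {lam} (h : IsCoupling P Q lam)
    {d : S → S → ℝ} {b : ℝ} (hb : ∀ i j, b ≤ d i j) :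
    b ≤ ∑ i, ∑ j, lam i j * d i j := by
  calc b = (∑ i, ∑ j, lam i j) * b := by rw [coupling_sum hP h, one_mul]
    _ = ∑ i, ∑ j, lam i j * b := by simp [Finset.sum_mul]
    _ ≤ ∑ i, ∑ j, lam i j * d i j := by
        refine Finset.sum_le_sum fun i _ => Finset.sum_le_sum fun j _ => ?_
        exact mul_le_mul_of_nonneg_left (hb i j) (h.1 i j)

lemma prod_coupling {P Q : S → ℝ} (hP : IsProbDist P) (hQ : IsProbDist Q) :
    IsCoupling P Q (fun i j => P i * Q j) := by
  refine ⟨fun i j => mul_nonneg (hP.1 i) (hQ.1 j), fun i => ?_, fun j => ?_⟩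
  · rw [← Finset.mul_sum, hQ.2, mul_one]
  · rw [← Finset.sum_mul, hP.2, one_mul]

variable [Nonempty S]

lemma W1_set_nonempty {P Q : S → ℝ} (hP : IsProbDist P) (hQ : IsProbDist Q) (d : S → S → ℝ) :
    {c : ℝ | ∃ lam, IsCoupling P Q lam ∧ c = ∑ i, ∑ j, lam i j * d i j}.Nonempty :=
  ⟨_, _, prod_coupling hP hQ, rfl⟩

lemma W1_set_bddBelow {P Q : S → ℝ} (hP : IsProbDist P) (d : S → S → ℝ) :
    BddBelow {c : ℝ | ∃ lam, IsCoupling P Q lam ∧ c = ∑ i, ∑ j, lam i j * d i j} := by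
  refine ⟨Finset.univ.inf' Finset.univ_nonempty fun i =>
    Finset.univ.inf' Finset.univ_nonempty (d i), ?_⟩
  rintro c ⟨lam, hlam, rfl⟩
  refine le_cost hP.2 hlam fun i j => ?_
  exact le_trans (Finset.inf'_le _ (Finset.mem_univ i))
    (Finset.inf'_le _ (Finset.mem_univ j))

lemma W1_le_cost {P Q : S → ℝ} (hP : IsProbDist P) {lam} (h : IsCoupling P Q lam)
    (d : S → S → ℝ) : W1 P Q d ≤ ∑ i, ∑ j, lam i j * d i j :=
  csInf_le (W1_set_bddBelow hP d) ⟨lam, h, rfl⟩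

lemma le_W1 {P Q : S → ℝ} (hP : IsProbDist P) (hQ : IsProbDist Q) {d : S → S → ℝ} {c : ℝ}
    (h : ∀ lam, IsCoupling P Q lam → c ≤ ∑ i, ∑ j, lam i j * d i j) : c ≤ W1 P Q d :=
  le_csInf (W1_set_nonempty hP hQ d) (by rintro b ⟨lam, hlam, rfl⟩; exact h lam hlam)

lemma W1_nonneg {P Q : S → ℝ} (hP : IsProbDist P) (hQ : IsProbDist Q) {d : S → S → ℝ}
    (hd : ∀ i j, 0 ≤ d i j) : 0 ≤ W1 P Q d :=
  le_W1 hP hQ fun lam hlam => le_cost hP.2 hlam hd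

lemma W1_le {P Q : S → ℝ} (hP : IsProbDist P) (hQ : IsProbDist Q) {d : S → S → ℝ} {M : ℝ}
    (hd : ∀ i j, d i j ≤ M) : W1 P Q d ≤ M :=
  le_trans (W1_le_cost hP (prod_coupling hP hQ) d) (cost_le hP.2 (prod_coupling hP hQ) hd)

lemma W1_le_add {P Q : S → ℝ} (hP : IsProbDist P) (hQ : IsProbDist Q)
    {d d' : S → S → ℝ} {C : ℝ} (h : ∀ i j, d i j ≤ d' i j + C) :
    W1 P Q d ≤ W1 P Q d' + C := by
  rw [← sub_le_iff_le_add]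
  refine le_W1 hP hQ fun lam hlam => ?_
  rw [sub_le_iff_le_add]
  calc W1 P Q d ≤ ∑ i, ∑ j, lam i j * d i j := W1_le_cost hP hlam d
    _ ≤ ∑ i, ∑ j, lam i j * (d' i j + C) := by
        refine Finset.sum_le_sum fun i _ => Finset.sum_le_sum fun j _ => ?_
        exact mul_le_mul_of_nonneg_left (h i j) (hlam.1 i j)
    _ = (∑ i, ∑ j, lam i j * d' i j) + (∑ i, ∑ j, lam i j) * C := by
        simp [mul_add, Finset.sum_add_distrib, Finset.sum_mul]
    _ = (∑ i, ∑ j, lam i j * d' i j) + C := by rw [coupling_sum hP.2 hlam, one_mul]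

lemma abs_W1_sub {P Q : S → ℝ} (hP : IsProbDist P) (hQ : IsProbDist Q)
    {d d' : S → S → ℝ} {C : ℝ} (h : ∀ i j, |d i j - d' i j| ≤ C) :
    |W1 P Q d - W1 P Q d'| ≤ C := by
  rw [abs_sub_le_iff]
  constructor
  · rw [sub_le_iff_le_add, add_comm]
    exact W1_le_add hP hQ (d := d) (d' := d') fun i j => by have := (abs_sub_le_iff.mp (h i j)).1; linarith
  · rw [sub_le_iff_le_add, add_comm]
    exact W1_le_add hP hQ (d := d') (d' := d) fun i j => by have := (abs_sub_le_iff.mp (h i j)).2; linarith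

end Aux

lemma ciSup_abs_sub_le {ι : Type*} [Fintype ι] [Nonempty ι] {f g : ι → ℝ} {C : ℝ}
    (h : ∀ a, |f a - g a| ≤ C) : |(⨆ a, f a) - ⨆ a, g a| ≤ C := by
  rw [abs_sub_le_iff]
  constructor
  · rw [sub_le_iff_le_add]
    refine ciSup_le fun a => ?_
    have h1 := (abs_sub_le_iff.mp (h a)).1
    have h2 := le_ciSup (Finite.bddAbove_range g) a
    linarith
  · rw [sub_le_iff_le_add]
    refine ciSup_le fun a => ?_
    have h1 := (abs_sub_le_iff.mp (h a)).2
    have h2 := le_ciSup (Finite.bddAbove_range f) a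
    linarith

section Main

theorem Fop_contraction_and_fixed_point [Fintype S] [Nonempty S] [Fintype A] [Nonempty A]
    (P P' : S → A → S → ℝ) (R R' : S → A → ℝ) (γ Rmax : ℝ)
    (hγ : γ ∈ Set.Ioo (0:ℝ) 1)
    (hP : ∀ s a, IsProbDist (P s a)) (hP' : ∀ s a, IsProbDist (P' s a))
    (hRmax : Rmax = ⨆ i : S, ⨆ j : S, ⨆ a : A, |R i a - R' j a|) :
    (∀ d d' : S → S → ℝ,
        (∀ i j, d i j ∈ Set.Icc (0:ℝ) (Rmax / (1 - γ))) →
        (∀ i j, d' i j ∈ Set.Icc (0:ℝ) (Rmax / (1 - γ))) →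
        (⨆ i : S, ⨆ j : S, |Fop P P' R R' γ d i j - Fop P P' R R' γ d' i j|) ≤
          γ * ⨆ i : S, ⨆ j : S, |d i j - d' i j|) ∧
    (∃! dbar : S → S → ℝ,
        (∀ i j, dbar i j ∈ Set.Icc (0:ℝ) (Rmax / (1 - γ))) ∧
        Fop P P' R R' γ dbar = dbar) := by
  obtain ⟨hγ0, hγ1⟩ := hγ
  set M := Rmax / (1 - γ) with hM
  have hRb : ∀ i j a, |R i a - R' j a| ≤ Rmax := by
    intro i j a
    rw [hRmax]
    have h1 : |R i a - R' j a| ≤ ⨆ a, |R i a - R' j a| :=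
      le_ciSup (f := fun a => |R i a - R' j a|) (Finite.bddAbove_range _) a
    have h2 : (⨆ a, |R i a - R' j a|) ≤ ⨆ j, ⨆ a, |R i a - R' j a| :=
      le_ciSup (f := fun j => ⨆ a, |R i a - R' j a|) (Finite.bddAbove_range _) j
    have h3 : (⨆ j, ⨆ a, |R i a - R' j a|) ≤ ⨆ i, ⨆ j, ⨆ a, |R i a - R' j a| :=
      le_ciSup (f := fun i => ⨆ j, ⨆ a, |R i a - R' j a|) (Finite.bddAbove_range _) i
    exact h1.trans (h2.trans h3)
  have hRmax0 : 0 ≤ Rmax :=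
    le_trans (abs_nonneg _)
      (hRb (Classical.arbitrary S) (Classical.arbitrary S) (Classical.arbitrary A))
  have h1γ : (0:ℝ) < 1 - γ := by linarith
  have hM0 : 0 ≤ M := div_nonneg hRmax0 h1γ.le
  have hpt : ∀ (d d' : S → S → ℝ) (C : ℝ), (∀ i j, |d i j - d' i j| ≤ C) →
      ∀ i j, |Fop P P' R R' γ d i j - Fop P P' R R' γ d' i j| ≤ γ * C := by
    intro d d' C hC i j
    unfold Fop
    refine ciSup_abs_sub_le fun a => ?_
    have h1 : |W1 (P i a) (P' j a) d - W1 (P i a) (P' j a) d'| ≤ C :=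
      abs_W1_sub (hP i a) (hP' j a) hC
    calc |(|R i a - R' j a| + γ * W1 (P i a) (P' j a) d) -
          (|R i a - R' j a| + γ * W1 (P i a) (P' j a) d')|
        = γ * |W1 (P i a) (P' j a) d - W1 (P i a) (P' j a) d'| := by
          rw [add_sub_add_left_eq_sub, ← mul_sub, abs_mul, abs_of_pos hγ0]
      _ ≤ γ * C := mul_le_mul_of_nonneg_left h1 hγ0.le
  constructor
  · intro d d' _ _
    have hD : ∀ i j, |d i j - d' i j| ≤ ⨆ i, ⨆ j, |d i j - d' i j| := by
      intro i j
      have h1 : |d i j - d' i j| ≤ ⨆ j, |d i j - d' i j| :=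
        le_ciSup (f := fun j => |d i j - d' i j|) (Finite.bddAbove_range _) j
      have h2 : (⨆ j, |d i j - d' i j|) ≤ ⨆ i, ⨆ j, |d i j - d' i j| :=
        le_ciSup (f := fun i => ⨆ j, |d i j - d' i j|) (Finite.bddAbove_range _) i
      exact h1.trans h2
    exact ciSup_le fun i => ciSup_le fun j => hpt d d' _ hD i j
  · set F := Fop P P' R R' γ with hF
    have hdistpt : ∀ (d d' : S → S → ℝ) (i j : S), |d i j - d' i j| ≤ dist d d' := by
      intro d d' i j
      have h1 := dist_le_pi_dist (d i) (d' i) j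
      have h2 := dist_le_pi_dist d d' i
      rw [Real.dist_eq] at h1
      linarith
    have hLip : LipschitzWith ⟨γ, hγ0.le⟩ F := by
      apply LipschitzWith.of_dist_le_mul
      intro d d'
      show dist (F d) (F d') ≤ γ * dist d d'
      have hb : 0 ≤ γ * dist d d' := mul_nonneg hγ0.le dist_nonneg
      rw [dist_pi_le_iff hb]
      intro i
      rw [dist_pi_le_iff hb]
      intro j
      rw [Real.dist_eq]
      exact hpt d d' (dist d d') (hdistpt d d') i j
    have hCon : ContractingWith ⟨γ, hγ0.le⟩ F := ⟨by exact_mod_cast hγ1, hLip⟩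
    have hMeq : Rmax + γ * M = M := by
      rw [hM]
      field_simp
      ring
    have hmapsto : ∀ d : S → S → ℝ, (∀ i j, d i j ∈ Set.Icc (0:ℝ) M) →
        ∀ i j, F d i j ∈ Set.Icc (0:ℝ) M := by
      intro d hd i j
      have hW0 : ∀ a : A, 0 ≤ W1 (P i a) (P' j a) d :=
        fun a => W1_nonneg (hP i a) (hP' j a) fun i j => (hd i j).1
      have hWM : ∀ a : A, W1 (P i a) (P' j a) d ≤ M :=
        fun a => W1_le (hP i a) (hP' j a) fun i j => (hd i j).2
      constructor
      · refine le_ciSup_of_le (Finite.bddAbove_range _) (Classical.arbitrary A) ?_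
        exact add_nonneg (abs_nonneg _) (mul_nonneg hγ0.le (hW0 _))
      · refine ciSup_le fun a => ?_
        calc |R i a - R' j a| + γ * W1 (P i a) (P' j a) d
            ≤ Rmax + γ * M :=
              add_le_add (hRb i j a) (mul_le_mul_of_nonneg_left (hWM a) hγ0.le)
          _ = M := hMeq
    have hbox_closed : IsClosed {d : S → S → ℝ | ∀ i j, d i j ∈ Set.Icc (0:ℝ) M} := by
      have : {d : S → S → ℝ | ∀ i j, d i j ∈ Set.Icc (0:ℝ) M} =
          ⋂ i, ⋂ j, (fun d : S → S → ℝ => d i j) ⁻¹' Set.Icc 0 M := by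
        ext d; simp [Set.mem_iInter]
      rw [this]
      exact isClosed_iInter fun i => isClosed_iInter fun j =>
        isClosed_Icc.preimage ((continuous_apply j).comp (continuous_apply i))
    have hiter : ∀ n : ℕ, (F^[n] fun _ _ => 0) ∈
        {d : S → S → ℝ | ∀ i j, d i j ∈ Set.Icc (0:ℝ) M} := by
      intro n
      induction n with
      | zero =>
        simp only [Function.iterate_zero, id]
        exact fun i j => ⟨le_rfl, hM0⟩
      | succ n ih =>
        rw [Function.iterate_succ_apply']
        exact hmapsto _ ih
    refine ⟨ContractingWith.fixedPoint F hCon, ⟨?_, hCon.fixedPoint_isFixedPt⟩, ?_⟩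
    · exact hbox_closed.mem_of_tendsto (hCon.tendsto_iterate_fixedPoint fun _ _ => 0)
        (Filter.Eventually.of_forall hiter)
    · rintro y ⟨-, hy⟩
      exact hCon.fixedPoint_unique hy

end Main
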